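/- Let n be odd, p an odd prime not dividing n, and q a power of p. The exceptionality set E'_{n,q} = {t ≥ 1 : gcd(n, q^{2t} − 1) = 1} is nonempty if and only if for every prime divisor ℓ of n, the multiplicative order of q modulo ℓ exceeds 2. -/

import Mathlib

lemma aux_cast_ne_zero {q ℓ : ℕ} (hℓ : ℓ.Prime) (hnd : ¬ ℓ ∣ q) :
    ((q : ℕ) : ZMod ℓ) ≠ 0 := by
  haveI : Fact ℓ.Prime := ⟨hℓ⟩
  intro h
  exact hnd ((ZMod.natCast_eq_zero_iff q ℓ).mp h)

/-- Let `n` be odd, `p` an odd prime not dividing `n`, and `q = p^e`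
(`e ≥ 1`). The exceptionality set `E'_{n,q} = {t ≥ 1 : gcd(n, q^{2t} − 1) = 1}` is
nonempty if and only if for every prime divisor `ℓ` of `n`, the multiplicative
order of `q` modulo `ℓ` exceeds 2. -/
theorem exceptionality_set_nonempty_iff (n p e q : ℕ) (hn : Odd n) (hp : p.Prime)
    (hpodd : p ≠ 2) (hpn : ¬ p ∣ n) (he : 1 ≤ e) (hq : q = p ^ e) :
    (∃ t : ℕ, 1 ≤ t ∧ Nat.Coprime n (q ^ (2 * t) - 1)) ↔
      ∀ ℓ : ℕ, ℓ.Prime → ℓ ∣ n → 2 < orderOf (q : ZMod ℓ) := by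
  have hq1 : 1 ≤ q := by
    rw [hq]; exact Nat.one_le_pow _ _ hp.pos
  have hndvd : ∀ ℓ : ℕ, ℓ.Prime → ℓ ∣ n → ¬ ℓ ∣ q := by
    intro ℓ hℓ hℓn hdq
    rw [hq] at hdq
    have : ℓ = p := (Nat.prime_dvd_prime_iff_eq hℓ hp).mp (hℓ.dvd_of_dvd_pow hdq)
    exact hpn (this ▸ hℓn)
  have hcast : ∀ (ℓ t : ℕ), ℓ.Prime → (ℓ ∣ q ^ (2 * t) - 1 ↔ ((q : ZMod ℓ)) ^ (2 * t) = 1) := by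
    intro ℓ t hℓ
    haveI : Fact ℓ.Prime := ⟨hℓ⟩
    rw [← ZMod.natCast_eq_zero_iff]
    have h1 : 1 ≤ q ^ (2 * t) := Nat.one_le_pow _ _ hq1
    push_cast [Nat.cast_sub h1]
    constructor
    · intro h; linear_combination h
    · intro h; linear_combination h
  constructor
  · rintro ⟨t, ht, hcop⟩ ℓ hℓ hℓn
    haveI : Fact ℓ.Prime := ⟨hℓ⟩
    by_contra hle
    push_neg at hle
    have hne : ((q : ℕ) : ZMod ℓ) ≠ 0 := aux_cast_ne_zero hℓ (hndvd ℓ hℓ hℓn)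
    have hpos : 0 < orderOf ((q : ℕ) : ZMod ℓ) := by
      have h2 : 2 ≤ ℓ := hℓ.two_le
      exact orderOf_pos_iff.mpr (isOfFinOrder_iff_pow_eq_one.mpr
        ⟨ℓ - 1, by omega, ZMod.pow_card_sub_one_eq_one hne⟩)
    have hord2 : orderOf ((q : ℕ) : ZMod ℓ) ∣ 2 := by
      interval_cases h : orderOf ((q : ℕ) : ZMod ℓ) <;> norm_num
    have hpow : ((q : ZMod ℓ)) ^ (2 * t) = 1 :=
      orderOf_dvd_iff_pow_eq_one.mp (hord2.trans ⟨t, rfl⟩)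
    have hdvd : ℓ ∣ q ^ (2 * t) - 1 := (hcast ℓ t hℓ).mpr hpow
    have : ℓ ∣ 1 := hcop ▸ Nat.dvd_gcd hℓn hdvd
    exact hℓ.one_lt.ne' (Nat.dvd_one.mp this)
  · intro hord
    refine ⟨(n - 1).factorial + 1, le_add_self, ?_⟩
    by_contra hnc
    obtain ⟨ℓ, hℓ, hℓn, hℓd⟩ := Nat.Prime.not_coprime_iff_dvd.mp hnc
    haveI : Fact ℓ.Prime := ⟨hℓ⟩
    have hne : ((q : ℕ) : ZMod ℓ) ≠ 0 := aux_cast_ne_zero hℓ (hndvd ℓ hℓ hℓn)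
    have hdvd1 : orderOf ((q : ℕ) : ZMod ℓ) ∣ 2 * ((n - 1).factorial + 1) :=
      orderOf_dvd_of_pow_eq_one ((hcast ℓ _ hℓ).mp hℓd)
    have hℓ1 : orderOf ((q : ℕ) : ZMod ℓ) ∣ ℓ - 1 :=
      orderOf_dvd_of_pow_eq_one (ZMod.pow_card_sub_one_eq_one hne)
    have hℓlen : ℓ ≤ n := Nat.le_of_dvd hn.pos hℓn
    have h2ℓ : 2 ≤ ℓ := hℓ.two_le
    have hfac : (ℓ - 1) ∣ (n - 1).factorial :=
      Nat.dvd_factorial (by omega) (by omega)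
    have hdvd2 : orderOf ((q : ℕ) : ZMod ℓ) ∣ 2 * (n - 1).factorial :=
      (hℓ1.trans hfac).mul_left 2
    have h2 : orderOf ((q : ℕ) : ZMod ℓ) ∣ 2 := by
      have := Nat.dvd_sub hdvd1 hdvd2
      simpa [Nat.mul_add, Nat.add_sub_cancel_left] using this
    have := Nat.le_of_dvd (by norm_num) h2
    exact absurd (hord ℓ hℓ hℓn) (by omega)
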